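/- Fix an integer k >= 1 and let P(R^k) be the space of Borel probability measures on R^k equipped with the topology of weak convergence. The set D of all probability measures on R^k that belong to the multivariate maximum domain of attraction is dense in P(R^k). -/

import Mathlib

open MeasureTheory Filter Topology Set NNReal

/-- The multivariate cumulative distribution function of a Borel probability measure on `ℝ^k`:
`F(x) = μ(∏ i, (-∞, x i])`. -/
noncomputable def mdistrib {k : ℕ} (μ : ProbabilityMeasure (Fin k → ℝ)) (x : Fin k → ℝ) : ℝ :=
  (μ (Set.Iic x) : ℝ≥0)

/-- `μ` belongs to the multivariate maximum domain of attraction: there are affine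
normalizations `x ↦ α n * x + β n` (componentwise, with positive slopes) and a limit
distribution `G` with all one-dimensional marginals nondegenerate such that
`(F (α n * x + β n)) ^ n → G x` at every continuity point `x` of `G`. -/
def MemMultiDomAttr {k : ℕ} (μ : ProbabilityMeasure (Fin k → ℝ)) : Prop :=
  ∃ α β : ℕ → Fin k → ℝ, (∀ n i, 0 < α n i) ∧
    ∃ G : ProbabilityMeasure (Fin k → ℝ),
      (∀ i : Fin k, ∀ c : ℝ, (G : Measure (Fin k → ℝ)).map (fun y => y i) ≠ Measure.dirac c) ∧
      ∀ x : Fin k → ℝ, ContinuousAt (mdistrib G) x →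
        Tendsto (fun n : ℕ => mdistrib μ (fun i => α n i * x i + β n i) ^ n) atTop
          (𝓝 (mdistrib G x))


lemma mdistrib_eq {k : ℕ} (P : ProbabilityMeasure (Fin k → ℝ)) (x : Fin k → ℝ) :
    mdistrib P x = ((P : Measure (Fin k → ℝ)) (Set.Iic x)).toReal := rfl

noncomputable def frechetM : Measure ℝ :=
  (volume.restrict (Set.Ioo (0:ℝ) 1)).map (fun u => 1 / (-Real.log u))

lemma frechet_measurable : Measurable (fun u : ℝ => 1 / (-Real.log u)) := by
  simp only [one_div]
  exact Real.measurable_log.neg.inv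

lemma frechetM_Iic_pos {t : ℝ} (ht : 0 < t) :
    frechetM (Set.Iic t) = ENNReal.ofReal (Real.exp (-(1 / t))) := by
  rw [frechetM, Measure.map_apply frechet_measurable measurableSet_Iic,
    Measure.restrict_apply (frechet_measurable measurableSet_Iic)]
  have hexp : Real.exp (-(1/t)) < 1 := by
    apply Real.exp_lt_one_iff.mpr
    simp [ht]
  have : (fun u : ℝ => 1 / (-Real.log u)) ⁻¹' Set.Iic t ∩ Set.Ioo 0 1
      = Set.Ioc 0 (Real.exp (-(1/t))) := by
    ext u
    simp only [Set.mem_inter_iff, Set.mem_preimage, Set.mem_Iic, Set.mem_Ioo, Set.mem_Ioc]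
    constructor
    · rintro ⟨hgu, hu0, hu1⟩
      have hlog : 0 < -Real.log u := by
        have := Real.log_neg hu0 hu1
        linarith
      refine ⟨hu0, ?_⟩
      rw [← Real.log_le_iff_le_exp hu0]
      have : 1 / t ≤ -Real.log u := (one_div_le hlog ht).mp hgu
      linarith
    · rintro ⟨hu0, hu1⟩
      have hul : u < 1 := lt_of_le_of_lt hu1 hexp
      have hlog : 0 < -Real.log u := by
        have := Real.log_neg hu0 hul
        linarith
      refine ⟨?_, hu0, hul⟩
      have h1 : Real.log u ≤ -(1/t) := (Real.log_le_iff_le_exp hu0).mpr hu1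
      have : 1 / t ≤ -Real.log u := by linarith
      exact (one_div_le ht hlog).mp this
  rw [this, Real.volume_Ioc]
  norm_num

lemma frechetM_Iic_nonpos {t : ℝ} (ht : t ≤ 0) : frechetM (Set.Iic t) = 0 := by
  rw [frechetM, Measure.map_apply frechet_measurable measurableSet_Iic,
    Measure.restrict_apply (frechet_measurable measurableSet_Iic)]
  convert measure_empty
  · ext u
    simp only [Set.mem_inter_iff, Set.mem_preimage, Set.mem_Iic, Set.mem_Ioo, Set.mem_empty_iff_false,
      iff_false, not_and]
    intro hgu hu0 hu1
    have hlog : 0 < -Real.log u := by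
      have := Real.log_neg hu0 hu1
      linarith
    have : (0:ℝ) < 1 / (-Real.log u) := by positivity
    linarith
  · infer_instance

instance : IsProbabilityMeasure frechetM := by
  constructor
  rw [frechetM, Measure.map_apply frechet_measurable MeasurableSet.univ]
  simp [Real.volume_Ioo]

noncomputable def nuM (k : ℕ) : Measure (Fin k → ℝ) := Measure.pi fun _ => frechetM

instance (k : ℕ) : IsProbabilityMeasure (nuM k) := by
  unfold nuM; infer_instance

lemma nuM_Iic (k : ℕ) (y : Fin k → ℝ) :
    nuM k (Set.Iic y) = ∏ i, frechetM (Set.Iic (y i)) := by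
  rw [← Set.pi_univ_Iic, nuM, Measure.pi_pi]

lemma nuM_Iic_pos (k : ℕ) {y : Fin k → ℝ} (hy : ∀ i, 0 < y i) :
    nuM k (Set.Iic y) = ENNReal.ofReal (Real.exp (-∑ i, 1 / y i)) := by
  rw [nuM_Iic]
  have : ∀ i ∈ Finset.univ, frechetM (Set.Iic (y i))
      = ENNReal.ofReal (Real.exp (-(1 / y i))) := fun i _ => frechetM_Iic_pos (hy i)
  rw [Finset.prod_congr rfl this, ← ENNReal.ofReal_prod_of_nonneg
    (fun i _ => (Real.exp_pos _).le), ← Real.exp_sum]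
  congr 1
  rw [← Finset.sum_neg_distrib]

lemma nuM_Iic_nonpos (k : ℕ) {y : Fin k → ℝ} {i : Fin k} (hy : y i ≤ 0) :
    nuM k (Set.Iic y) = 0 := by
  rw [nuM_Iic]
  exact Finset.prod_eq_zero (Finset.mem_univ i) (frechetM_Iic_nonpos hy)

lemma nuM_eval_Iic (k : ℕ) (i : Fin k) (t : ℝ) :
    nuM k {z | z i ≤ t} = frechetM (Set.Iic t) := by
  have : {z : Fin k → ℝ | z i ≤ t}
      = Set.pi Set.univ (fun j => if j = i then Set.Iic t else Set.univ) := by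
    ext z
    simp only [Set.mem_setOf_eq, Set.mem_pi, Set.mem_univ, forall_true_left]
    constructor
    · intro h j
      by_cases hj : j = i <;> simp [hj, h]
    · intro h
      have := h i
      simpa using this
  rw [this, nuM, Measure.pi_pi]
  rw [Finset.prod_eq_single i]
  · simp
  · intro j _ hj
    simp [hj]
  · simp

def boxS (k m : ℕ) : Set (Fin k → ℝ) := Set.Iic (fun _ => (m:ℝ))

lemma boxS_meas (k m : ℕ) : MeasurableSet (boxS k m) := by
  rw [boxS, ← Set.pi_univ_Iic]
  exact MeasurableSet.univ_pi fun i => measurableSet_Iic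

noncomputable def approxM (k : ℕ) (μ : Measure (Fin k → ℝ)) (m : ℕ) : Measure (Fin k → ℝ) :=
  (nuM k (boxS k m) / μ (boxS k m)) • μ.restrict (boxS k m) + (nuM k).restrict (boxS k m)ᶜ

lemma approxM_isProb (k : ℕ) (μ : Measure (Fin k → ℝ)) [IsProbabilityMeasure μ] (m : ℕ)
    (hp : μ (boxS k m) ≠ 0) : IsProbabilityMeasure (approxM k μ m) := by
  constructor
  rw [approxM, Measure.add_apply, Measure.smul_apply, smul_eq_mul,
    Measure.restrict_apply_univ, Measure.restrict_apply_univ,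
    ENNReal.div_mul_cancel hp (measure_ne_top μ _),
    measure_compl (boxS_meas k m) (measure_ne_top _ _), measure_univ,
    add_tsub_cancel_of_le prob_le_one]

lemma approxM_Iic_ge (k : ℕ) (μ : Measure (Fin k → ℝ)) [IsProbabilityMeasure μ] (m : ℕ)
    (hp : μ (boxS k m) ≠ 0) {y : Fin k → ℝ} (hy : (fun _ => (m:ℝ)) ≤ y) :
    approxM k μ m (Set.Iic y) = nuM k (Set.Iic y) := by
  have hBy : boxS k m ⊆ Set.Iic y := Set.Iic_subset_Iic.mpr hy
  rw [approxM, Measure.add_apply, Measure.smul_apply, smul_eq_mul,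
    Measure.restrict_apply measurableSet_Iic, Measure.restrict_apply measurableSet_Iic,
    Set.inter_eq_right.mpr hBy, ENNReal.div_mul_cancel hp (measure_ne_top μ _),
    Set.inter_comm]
  have : (boxS k m)ᶜ ∩ Set.Iic y = Set.Iic y \ boxS k m := by
    rw [Set.diff_eq, Set.inter_comm]
  rw [this, measure_diff hBy (boxS_meas k m).nullMeasurableSet (measure_ne_top _ _),
    add_tsub_cancel_of_le (measure_mono hBy)]

lemma approxM_Iic_le (k : ℕ) (μ : Measure (Fin k → ℝ)) [IsProbabilityMeasure μ] (m : ℕ)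
    (hp : μ (boxS k m) ≠ 0) {y : Fin k → ℝ} {i : Fin k} (hyi : y i ≤ 0) :
    approxM k μ m (Set.Iic y) ≤ nuM k (boxS k m) := by
  rw [approxM, Measure.add_apply, Measure.smul_apply, smul_eq_mul,
    Measure.restrict_apply measurableSet_Iic, Measure.restrict_apply measurableSet_Iic]
  have h2 : nuM k (Set.Iic y ∩ (boxS k m)ᶜ) = 0 :=
    measure_mono_null Set.inter_subset_left (nuM_Iic_nonpos k hyi)
  rw [h2, add_zero]
  calc nuM k (boxS k m) / μ (boxS k m) * μ (Set.Iic y ∩ boxS k m)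
      ≤ nuM k (boxS k m) / μ (boxS k m) * μ (boxS k m) := by
        gcongr
        exact Set.inter_subset_right
    _ = nuM k (boxS k m) := ENNReal.div_mul_cancel hp (measure_ne_top μ _)

lemma memMDA (k : ℕ) (hk : 1 ≤ k) (μ : ProbabilityMeasure (Fin k → ℝ)) (m : ℕ) (hm : 1 ≤ m)
    (hp : (μ : Measure (Fin k → ℝ)) (boxS k m) ≠ 0) :
    MemMultiDomAttr (⟨approxM k (μ : Measure (Fin k → ℝ)) m,
      approxM_isProb k (μ : Measure (Fin k → ℝ)) m hp⟩ : ProbabilityMeasure (Fin k → ℝ)) := by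
  haveI : Nonempty (Fin k) := ⟨⟨0, hk⟩⟩
  refine ⟨fun n i => max (n : ℝ) 1, fun n i => 0, fun n i =>
    lt_of_lt_of_le zero_lt_one (le_max_right _ _), ⟨nuM k, inferInstance⟩, ?_, ?_⟩
  · -- nondegenerate marginals
    intro i c h
    have h1 : (nuM k).map (fun y => y i) (Set.Iic (max c 1)) = frechetM (Set.Iic (max c 1)) := by
      rw [Measure.map_apply (measurable_pi_apply i) measurableSet_Iic]
      have : (fun y : Fin k → ℝ => y i) ⁻¹' Set.Iic (max c 1) = {z | z i ≤ max c 1} := rfl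
      rw [this, nuM_eval_Iic]
    have h2 : Measure.dirac c (Set.Iic (max c 1)) = 1 := by
      rw [Measure.dirac_apply' _ measurableSet_Iic]
      simp [Set.indicator_of_mem, Set.mem_Iic, le_max_left]
    have h' : Measure.map (fun y => y i) (nuM k) = Measure.dirac c := h
    rw [h'] at h1
    rw [h2, frechetM_Iic_pos (lt_of_lt_of_le zero_lt_one (le_max_right c 1))] at h1
    have : Real.exp (-(1 / max c 1)) < 1 := by
      apply Real.exp_lt_one_iff.mpr
      have : (0:ℝ) < max c 1 := lt_of_lt_of_le zero_lt_one (le_max_right c 1)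
      simp [this]
    exact absurd h1.symm (ne_of_lt (by exact_mod_cast ENNReal.ofReal_lt_one.mpr this))
  · -- convergence
    intro x _
    have hGcoe : ((⟨nuM k, inferInstance⟩ : ProbabilityMeasure (Fin k → ℝ)) :
        Measure (Fin k → ℝ)) = nuM k := rfl
    by_cases hpos : ∀ i, 0 < x i
    · -- all coordinates positive
      set S : ℝ := ∑ i, 1 / x i with hS
      have hGx : mdistrib ⟨nuM k, inferInstance⟩ x = Real.exp (-S) := by
        unfold mdistrib
        show (nuM k (Set.Iic x)).toReal = _
        rw [nuM_Iic_pos k hpos, ENNReal.toReal_ofReal (Real.exp_pos _).le]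
      rw [hGx]
      -- choose δ
      set δ : ℝ := Finset.univ.inf' Finset.univ_nonempty x with hδdef
      have hδpos : 0 < δ := by
        rw [hδdef, Finset.lt_inf'_iff]
        exact fun i _ => hpos i
      set N : ℕ := max ⌈(m : ℝ) / δ⌉₊ 1 with hN
      apply Tendsto.congr' _ tendsto_const_nhds
      filter_upwards [eventually_ge_atTop N] with n hn
      have hn1 : 1 ≤ n := le_trans (le_max_right _ 1) hn
      have hnR : (1:ℝ) ≤ (n:ℝ) := by exact_mod_cast hn1
      have hnpos : (0:ℝ) < n := lt_of_lt_of_le zero_lt_one hnR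
      have hα : max (n : ℝ) 1 = (n : ℝ) := max_eq_left hnR
      have hy : (fun _ : Fin k => (m : ℝ)) ≤ fun i => (n : ℝ) * x i := by
        intro i
        have h1 : (m : ℝ) / δ ≤ (n : ℝ) := by
          calc (m : ℝ) / δ ≤ (⌈(m : ℝ) / δ⌉₊ : ℝ) := Nat.le_ceil _
            _ ≤ (N : ℝ) := by exact_mod_cast le_max_left _ 1
            _ ≤ (n : ℝ) := by exact_mod_cast hn
        have h2 : (m : ℝ) ≤ (n : ℝ) * δ := by
          rw [div_le_iff₀ hδpos] at h1
          linarith [h1]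
        calc (m : ℝ) ≤ (n : ℝ) * δ := h2
          _ ≤ (n : ℝ) * x i := by
            apply mul_le_mul_of_nonneg_left _ hnpos.le
            exact Finset.inf'_le x (Finset.mem_univ i)
      have hxy : ∀ i, 0 < (n : ℝ) * x i := fun i => mul_pos hnpos (hpos i)
      have hF : mdistrib ⟨approxM k (μ : Measure (Fin k → ℝ)) m,
          approxM_isProb k (μ : Measure (Fin k → ℝ)) m hp⟩
          (fun i => max (n : ℝ) 1 * x i + 0) = Real.exp (-(1 / (n : ℝ) * S)) := by
        unfold mdistrib
        have hfun : (fun i => max (n : ℝ) 1 * x i + 0) = fun i => (n : ℝ) * x i := by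
          funext i; rw [hα, add_zero]
        show (approxM k (μ : Measure (Fin k → ℝ)) m (Set.Iic fun i => max (n:ℝ) 1 * x i + 0)).toReal
          = _
        rw [hfun, approxM_Iic_ge k _ m hp hy, nuM_Iic_pos k hxy,
          ENNReal.toReal_ofReal (Real.exp_pos _).le]
        congr 1
        have : ∀ i ∈ Finset.univ, 1 / ((n:ℝ) * x i) = 1 / (n:ℝ) * (1 / x i) := by
          intro i _; rw [one_div_mul_one_div]
        rw [Finset.sum_congr rfl this, ← Finset.mul_sum]
      rw [hF, ← Real.exp_nat_mul]
      congr 1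
      field_simp
    · push_neg at hpos
      obtain ⟨i, hxi⟩ := hpos
      have hGx : mdistrib ⟨nuM k, inferInstance⟩ x = 0 := by
        unfold mdistrib
        show (nuM k (Set.Iic x)).toReal = _
        rw [nuM_Iic_nonpos k hxi, ENNReal.toReal_zero]
      rw [hGx]
      set r : ℝ := Real.exp (-∑ _i : Fin k, 1 / (m : ℝ)) with hr
      have hrpos : 0 < r := Real.exp_pos _
      have hr1 : r < 1 := by
        rw [hr]
        apply Real.exp_lt_one_iff.mpr
        rw [neg_lt, neg_zero]
        apply Finset.sum_pos
        · intro j _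
          positivity
        · exact Finset.univ_nonempty
      have hbound : ∀ n : ℕ, mdistrib ⟨approxM k (μ : Measure (Fin k → ℝ)) m,
          approxM_isProb k (μ : Measure (Fin k → ℝ)) m hp⟩
          (fun j => max (n : ℝ) 1 * x j + 0) ≤ r := by
        intro n
        unfold mdistrib
        have hyi : max (n : ℝ) 1 * x i + 0 ≤ 0 := by
          rw [add_zero]
          exact mul_nonpos_of_nonneg_of_nonpos (le_trans zero_le_one (le_max_right _ _)) hxi
        have hbox : nuM k (boxS k m) = ENNReal.ofReal r := by
          rw [boxS, nuM_Iic_pos k (fun j => by positivity), hr]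
        have := approxM_Iic_le k (μ : Measure (Fin k → ℝ)) m hp
          (y := fun j => max (n : ℝ) 1 * x j + 0) (i := i) hyi
        rw [hbox] at this
        calc ((approxM k (μ : Measure (Fin k → ℝ)) m)
            (Set.Iic fun j => max (n : ℝ) 1 * x j + 0)).toReal
            ≤ (ENNReal.ofReal r).toReal := ENNReal.toReal_mono ENNReal.ofReal_ne_top this
          _ = r := ENNReal.toReal_ofReal hrpos.le
      apply squeeze_zero (fun n => pow_nonneg ?_ n) (fun n => pow_le_pow_left₀ ?_ (hbound n) n)
      · exact tendsto_pow_atTop_nhds_zero_of_lt_one hrpos.le hr1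
      · unfold mdistrib; exact NNReal.coe_nonneg _
      · unfold mdistrib; exact NNReal.coe_nonneg _

lemma boxS_mono (k : ℕ) : Monotone (boxS k) := by
  intro a b hab
  exact Set.Iic_subset_Iic.mpr (fun i => Nat.cast_le.mpr hab)

lemma boxS_iUnion (k : ℕ) : (⋃ m, boxS k m) = Set.univ := by
  ext z
  simp only [Set.mem_iUnion, Set.mem_univ, iff_true, boxS, Set.mem_Iic]
  refine ⟨⌈∑ i, |z i|⌉₊, fun i => ?_⟩
  calc z i ≤ |z i| := le_abs_self _
    _ ≤ ∑ j, |z j| := Finset.single_le_sum (fun j _ => abs_nonneg (z j)) (Finset.mem_univ i)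
    _ ≤ (⌈∑ j, |z j|⌉₊ : ℝ) := Nat.le_ceil _

/-- For every `k ≥ 1`, the set `D` of probability measures on `ℝ^k` belonging to the
multivariate maximum domain of attraction is dense in the space of Borel probability
measures on `ℝ^k` with the topology of weak convergence. -/
theorem dense_multivariate_domain_of_attraction (k : ℕ) (hk : 1 ≤ k) :
    Dense {μ : ProbabilityMeasure (Fin k → ℝ) | MemMultiDomAttr μ} := by
  intro μ
  -- find m₀ with positive mass on the box
  have hex : ∃ m₀ : ℕ, (μ : Measure (Fin k → ℝ)) (boxS k m₀) ≠ 0 := by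
    by_contra h
    push_neg at h
    have := measure_iUnion_null (μ := (μ : Measure (Fin k → ℝ))) h
    rw [boxS_iUnion k] at this
    simp at this
  obtain ⟨m₀, hm₀⟩ := hex
  have hpm : ∀ m : ℕ, (μ : Measure (Fin k → ℝ)) (boxS k (m + (m₀ + 1))) ≠ 0 := by
    intro m
    have : (μ : Measure (Fin k → ℝ)) (boxS k m₀)
        ≤ (μ : Measure (Fin k → ℝ)) (boxS k (m + (m₀ + 1))) :=
      measure_mono (boxS_mono k (by omega))
    intro h0
    exact hm₀ (le_antisymm (h0 ▸ this) zero_le)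
  set f : ℕ → ProbabilityMeasure (Fin k → ℝ) := fun m =>
    ⟨approxM k (μ : Measure (Fin k → ℝ)) (m + (m₀ + 1)),
      approxM_isProb k (μ : Measure (Fin k → ℝ)) (m + (m₀ + 1)) (hpm m)⟩ with hf
  have hmem : ∀ m, f m ∈ {ν : ProbabilityMeasure (Fin k → ℝ) | MemMultiDomAttr ν} :=
    fun m => memMDA k hk μ (m + (m₀ + 1)) (by omega) (hpm m)
  refine mem_closure_of_tendsto (b := atTop) (f := f) ?_ (Eventually.of_forall hmem)
  rw [ProbabilityMeasure.tendsto_iff_forall_integral_tendsto]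
  intro g
  -- per-index decomposition of the integral
  have hdecomp : ∀ j : ℕ, (μ : Measure (Fin k → ℝ)) (boxS k j) ≠ 0 →
      ∫ x, g x ∂(approxM k (μ : Measure (Fin k → ℝ)) j)
      = (nuM k (boxS k j) / (μ : Measure (Fin k → ℝ)) (boxS k j)).toReal
          * ∫ x in boxS k j, g x ∂(μ : Measure (Fin k → ℝ))
        + ∫ x in (boxS k j)ᶜ, g x ∂(nuM k) := by
    intro j hj
    haveI : IsProbabilityMeasure (approxM k (μ : Measure (Fin k → ℝ)) j) :=
      approxM_isProb k _ j hj
    have hint : Integrable g (approxM k (μ : Measure (Fin k → ℝ)) j) := g.integrable _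
    rw [approxM] at hint
    obtain ⟨h1, h2⟩ := integrable_add_measure.mp hint
    rw [approxM, integral_add_measure h1 h2, integral_smul_measure, smul_eq_mul]
  -- the three limits (over all j)
  have T1 : Tendsto (fun j : ℕ =>
      (nuM k (boxS k j) / (μ : Measure (Fin k → ℝ)) (boxS k j)).toReal) atTop (𝓝 1) := by
    have hnum : Tendsto (fun j : ℕ => (nuM k (boxS k j)).toReal) atTop (𝓝 1) := by
      have h := tendsto_measure_iUnion_atTop (μ := nuM k) (boxS_mono k)
      rw [boxS_iUnion k, measure_univ] at h
      have := (ENNReal.tendsto_toReal (by norm_num : (1:ENNReal) ≠ ⊤)).comp h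
      simpa [Function.comp_def] using this
    have hden : Tendsto (fun j : ℕ => ((μ : Measure (Fin k → ℝ)) (boxS k j)).toReal)
        atTop (𝓝 1) := by
      have h := tendsto_measure_iUnion_atTop (μ := (μ : Measure (Fin k → ℝ))) (boxS_mono k)
      rw [boxS_iUnion k, measure_univ] at h
      have := (ENNReal.tendsto_toReal (by norm_num : (1:ENNReal) ≠ ⊤)).comp h
      simpa [Function.comp_def] using this
    have := hnum.div hden one_ne_zero
    simp only [ENNReal.toReal_div]
    rw [div_one] at this
    exact this
  have T2 : Tendsto (fun j : ℕ => ∫ x in boxS k j, g x ∂(μ : Measure (Fin k → ℝ))) atTop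
      (𝓝 (∫ x, g x ∂(μ : Measure (Fin k → ℝ)))) := by
    have := tendsto_setIntegral_of_monotone (μ := (μ : Measure (Fin k → ℝ)))
      (boxS_meas k) (boxS_mono k) ((g.integrable _).integrableOn)
    rwa [boxS_iUnion k, Measure.restrict_univ] at this
  have T3 : Tendsto (fun j : ℕ => ∫ x in (boxS k j)ᶜ, g x ∂(nuM k)) atTop (𝓝 0) := by
    have hcompl : Tendsto (fun j : ℕ => ((nuM k ((boxS k j)ᶜ)).toReal)) atTop (𝓝 0) := by
      have h := tendsto_measure_iInter_atTop (μ := nuM k)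
        (fun j => ((boxS_meas k j).compl).nullMeasurableSet)
        (fun a b hab => Set.compl_subset_compl.mpr (boxS_mono k hab))
        ⟨0, measure_ne_top _ _⟩
      have hint : (⋂ j, (boxS k j)ᶜ) = ∅ := by
        rw [← Set.compl_iUnion, boxS_iUnion k, Set.compl_univ]
      rw [hint, measure_empty] at h
      have := (ENNReal.tendsto_toReal (by norm_num : (0:ENNReal) ≠ ⊤)).comp h
      simpa [Function.comp_def] using this
    apply squeeze_zero_norm _ (by simpa using hcompl.const_mul ‖g‖)
    intro j
    calc ‖∫ x in (boxS k j)ᶜ, g x ∂(nuM k)‖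
        ≤ ‖g‖ * ((nuM k) ((boxS k j)ᶜ)).toReal :=
          norm_setIntegral_le_of_norm_le_const (measure_lt_top _ _)
            (fun x _ => g.norm_coe_le_norm x)
      _ = ‖g‖ * ((nuM k) ((boxS k j)ᶜ)).toReal := rfl
  have Tall : Tendsto (fun j : ℕ =>
      (nuM k (boxS k j) / (μ : Measure (Fin k → ℝ)) (boxS k j)).toReal
        * ∫ x in boxS k j, g x ∂(μ : Measure (Fin k → ℝ))
      + ∫ x in (boxS k j)ᶜ, g x ∂(nuM k)) atTop
      (𝓝 (∫ x, g x ∂(μ : Measure (Fin k → ℝ)))) := by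
    have := (T1.mul T2).add T3
    simpa using this
  have Tshift := Tall.comp (tendsto_add_atTop_nat (m₀ + 1))
  apply Tshift.congr
  intro m
  simp only [Function.comp]
  exact (hdecomp (m + (m₀ + 1)) (hpm m)).symm
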